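/- Let g be a 4-dimensional nilpotent real Lie algebra endowed with a linear D-complex structure g = g⁺ ⊕ g⁻ with associated endomorphism K. Then every K-invariant 2-form on g is closed: if α ∈ Λ^2 g* satisfies Kα = α, then dα = 0. Consequently, the K-invariant and K-anti-invariant components of any d-closed 2-form are both d-closed. -/

import Mathlib

open scoped BigOperators

noncomputable section ChevalleyEilenberg

variable (g : Type*) [LieRing g] [LieAlgebra ℝ g]

/-- The Chevalley–Eilenberg differential of an alternating `k`-form on a real Lie
algebra, as a function on `(k+1)`-tuples:
`(dα)(x_0,…,x_k) = Σ_{i<j} (−1)^{i+j} α([x_i,x_j], x_0,…,x̂_i,…,x̂_j,…,x_k)`. -/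
def ceD : {k : ℕ} → AlternatingMap ℝ g ℝ (Fin k) → ((Fin (k + 1) → g) → ℝ)
  | 0, _ => 0
  | (k + 1), α => fun x =>
      ∑ i : Fin (k + 2), ∑ j : Fin (k + 2),
        if hij : (i : ℕ) < (j : ℕ) then
          (-1 : ℝ) ^ ((i : ℕ) + (j : ℕ)) *
            α (fun m : Fin (k + 1) =>
                if hm : (m : ℕ) = 0 then ⁅x i, x j⁆
                else
                  x (j.succAbove
                      ((⟨(i : ℕ), by omega⟩ : Fin (k + 1)).succAbove
                        (⟨(m : ℕ) - 1, by omega⟩ : Fin k))))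
        else 0

theorem ceD_zero {k : ℕ} : ceD g (0 : AlternatingMap ℝ g ℝ (Fin k)) = 0 := by
  cases k with
  | zero => rfl
  | succ k => funext x; simp [ceD]

theorem ceD_add {k : ℕ} (α β : AlternatingMap ℝ g ℝ (Fin k)) :
    ceD g (α + β) = ceD g α + ceD g β := by
  cases k with
  | zero => funext x; simp [ceD]
  | succ k =>
    funext x
    simp only [ceD, Pi.add_apply, AlternatingMap.add_apply]
    rw [← Finset.sum_add_distrib]
    refine Finset.sum_congr rfl fun i _ => ?_
    rw [← Finset.sum_add_distrib]
    refine Finset.sum_congr rfl fun j _ => ?_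
    split
    · ring
    · ring

theorem ceD_smul {k : ℕ} (c : ℝ) (α : AlternatingMap ℝ g ℝ (Fin k)) :
    ceD g (c • α) = c • ceD g α := by
  cases k with
  | zero => funext x; simp [ceD]
  | succ k =>
    funext x
    simp only [ceD, Pi.smul_apply, AlternatingMap.smul_apply, smul_eq_mul,
      Finset.mul_sum]
    refine Finset.sum_congr rfl fun i _ => ?_
    refine Finset.sum_congr rfl fun j _ => ?_
    split
    · ring
    · ring

/-- The space of `d`-closed `k`-forms. -/
def Zsub (k : ℕ) : Submodule ℝ (AlternatingMap ℝ g ℝ (Fin k)) where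
  carrier := {α | ceD g α = 0}
  add_mem' := by
    intro a b ha hb
    simp only [Set.mem_setOf_eq] at *
    rw [ceD_add, ha, hb, add_zero]
  zero_mem' := by
    simpa only [Set.mem_setOf_eq] using ceD_zero g
  smul_mem' := by
    intro c a ha
    simp only [Set.mem_setOf_eq] at *
    rw [ceD_smul, ha, smul_zero]

/-- The space of `d`-exact `k`-forms. -/
def Bsub : (k : ℕ) → Submodule ℝ (AlternatingMap ℝ g ℝ (Fin k))
  | 0 => ⊥
  | (k + 1) =>
    { carrier := {α | ∃ β : AlternatingMap ℝ g ℝ (Fin k), ceD g β = ⇑α}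
      add_mem' := by
        rintro a b ⟨βa, hβa⟩ ⟨βb, hβb⟩
        exact ⟨βa + βb, by rw [ceD_add, hβa, hβb]; ext x; simp⟩
      zero_mem' := ⟨0, by rw [ceD_zero]; ext x; simp⟩
      smul_mem' := by
        rintro c a ⟨β, hβ⟩
        exact ⟨c • β, by rw [ceD_smul, hβ]; rfl⟩ }

/-- The `k`-th Lie algebra cohomology `H^k(g;ℝ) = ker d / im d`. -/
abbrev Hcoh (k : ℕ) : Type _ :=
  @HasQuotient.Quotient (↥(Zsub g k)) (Submodule ℝ ↥(Zsub g k)) (@Submodule.hasQuotient ℝ (↥(Zsub g k)) _ _ _)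
    ((Bsub g k).comap (Zsub g k).subtype)

/-- The cohomology class of a `d`-closed `k`-form. -/
def cls {k : ℕ} (α : AlternatingMap ℝ g ℝ (Fin k)) (hα : ceD g α = 0) : Hcoh g k :=
  Submodule.Quotient.mk (⟨α, hα⟩ : Zsub g k)

/-- The subgroup `H^{k+}_K(g;ℝ)` of classes admitting a `d`-closed `K`-invariant
representative.  (The set of such classes is a linear subspace, so taking its span
does not enlarge it.) -/
def Hplus (K : g →ₗ[ℝ] g) (k : ℕ) : Submodule ℝ (Hcoh g k) :=
  Submodule.span ℝ
    {c | ∃ (α : AlternatingMap ℝ g ℝ (Fin k)) (hα : ceD g α = 0),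
        α.compLinearMap K = α ∧ c = cls g α hα}

/-- The subgroup `H^{k−}_K(g;ℝ)` of classes admitting a `d`-closed
`K`-anti-invariant representative. -/
def Hminus (K : g →ₗ[ℝ] g) (k : ℕ) : Submodule ℝ (Hcoh g k) :=
  Submodule.span ℝ
    {c | ∃ (α : AlternatingMap ℝ g ℝ (Fin k)) (hα : ceD g α = 0),
        α.compLinearMap K = -α ∧ c = cls g α hα}

/-- The wedge product of `k` linear functionals, as an alternating `k`-form. -/
def wedge {k : ℕ} (fs : Fin k → (g →ₗ[ℝ] ℝ)) :
    AlternatingMap ℝ g ℝ (Fin k) :=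
  MultilinearMap.alternatization
    ((MultilinearMap.mkPiAlgebra ℝ (Fin k) ℝ).compLinearMap fs)

end ChevalleyEilenberg
noncomputable section
variable {g : Type*} [LieRing g] [LieAlgebra ℝ g]

private lemma upd0 (a b c : g) : Function.update ![a, b] 0 c = ![c, b] := by
  funext i; fin_cases i <;> simp
private lemma upd1 (a b c : g) : Function.update ![a, b] 1 c = ![a, c] := by
  funext i; fin_cases i <;> simp

lemma amap_add_left (α : AlternatingMap ℝ g ℝ (Fin 2)) (a b c : g) :
    α ![a + b, c] = α ![a, c] + α ![b, c] := by
  have := α.map_update_add ![a, c] 0 a b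
  rwa [upd0, upd0, upd0] at this

lemma amap_add_right (α : AlternatingMap ℝ g ℝ (Fin 2)) (a b c : g) :
    α ![a, b + c] = α ![a, b] + α ![a, c] := by
  have := α.map_update_add ![a, b] 1 b c
  rwa [upd1, upd1, upd1] at this

lemma amap_smul_left (α : AlternatingMap ℝ g ℝ (Fin 2)) (t : ℝ) (a c : g) :
    α ![t • a, c] = t * α ![a, c] := by
  have := α.map_update_smul ![a, c] 0 t a
  rwa [upd0, upd0] at this

lemma amap_smul_right (α : AlternatingMap ℝ g ℝ (Fin 2)) (t : ℝ) (a c : g) :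
    α ![a, t • c] = t * α ![a, c] := by
  have := α.map_update_smul ![a, c] 1 t c
  rwa [upd1, upd1] at this

lemma amap_same (α : AlternatingMap ℝ g ℝ (Fin 2)) (a : g) : α ![a, a] = 0 :=
  α.map_eq_zero_of_eq (i := 0) (j := 1) ![a, a] rfl (by decide)

lemma amap_swap (α : AlternatingMap ℝ g ℝ (Fin 2)) (a b : g) :
    α ![b, a] = -α ![a, b] := by
  have h := amap_same α (a + b)
  rw [amap_add_left, amap_add_right, amap_add_right, amap_same, amap_same] at h
  linarith

lemma amap_zero_left (α : AlternatingMap ℝ g ℝ (Fin 2)) (c : g) : α ![0, c] = 0 := by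
  have := amap_smul_left α 0 0 c; simpa using this

lemma amap_zero_right (α : AlternatingMap ℝ g ℝ (Fin 2)) (c : g) : α ![c, 0] = 0 := by
  have := amap_smul_right α 0 c 0; simpa using this

lemma amap_neg_left (α : AlternatingMap ℝ g ℝ (Fin 2)) (a c : g) :
    α ![-a, c] = -α ![a, c] := by
  have := amap_smul_left α (-1) a c; simpa using this


/-- On a 2-dimensional subspace, `α(Sx,y) + α(x,Sy) = tr(S)·α(x,y)`; for nilpotent `S` it is 0. -/
lemma pair_lemma (V : Submodule ℝ g) [FiniteDimensional ℝ V] (hV : Module.finrank ℝ V = 2)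
    (α : AlternatingMap ℝ g ℝ (Fin 2)) (S : Module.End ℝ V) (hS : IsNilpotent S)
    (x y : V) : α ![((S x : V) : g), (y : g)] + α ![(x : g), ((S y : V) : g)] = 0 := by
  classical
  let b : Module.Basis (Fin 2) ℝ V := Module.finBasisOfFinrankEq ℝ V hV
  have htr0 : LinearMap.trace ℝ V S = 0 :=
    (LinearMap.isNilpotent_trace_of_isNilpotent hS).eq_zero
  have htr : b.repr (S (b 0)) 0 + b.repr (S (b 1)) 1 = 0 := by
    have h1 := LinearMap.trace_eq_matrix_trace ℝ b S
    rw [htr0] at h1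
    rw [Matrix.trace, Fin.sum_univ_two] at h1
    simp only [Matrix.diag_apply, LinearMap.toMatrix_apply] at h1
    linarith
  set u0 : g := (b 0 : g) with hu0
  set u1 : g := (b 1 : g) with hu1
  have hrepr : ∀ v : V, (v : g) = b.repr v 0 • u0 + b.repr v 1 • u1 := by
    intro v
    have h := b.sum_repr v
    rw [Fin.sum_univ_two] at h
    calc (v : g) = ((b.repr v 0 • b 0 + b.repr v 1 • b 1 : V) : g) := by rw [h]
      _ = b.repr v 0 • u0 + b.repr v 1 • u1 := by push_cast; rfl
  have key : ∀ s t u v : ℝ, α ![s • u0 + t • u1, u • u0 + v • u1]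
      = (s * v - t * u) * α ![u0, u1] := by
    intro s t u v
    simp only [amap_add_left, amap_add_right, amap_smul_left, amap_smul_right, amap_same]
    rw [amap_swap α u0 u1]
    ring
  set A := b.repr (S (b 0)) 0; set B := b.repr (S (b 0)) 1
  set C := b.repr (S (b 1)) 0; set D := b.repr (S (b 1)) 1
  set a0 := b.repr x 0; set a1 := b.repr x 1
  set c0 := b.repr y 0; set c1 := b.repr y 1
  have hx : (x : g) = a0 • u0 + a1 • u1 := hrepr x
  have hy : (y : g) = c0 • u0 + c1 • u1 := hrepr y
  have hSx : ((S x : V) : g) = (a0 * A + a1 * C) • u0 + (a0 * B + a1 * D) • u1 := by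
    have hxv : x = a0 • b 0 + a1 • b 1 := by
      apply Subtype.ext; rw [hrepr x]; push_cast; rfl
    rw [hxv]; rw [map_add, map_smul, map_smul]
    push_cast
    rw [hrepr (S (b 0)), hrepr (S (b 1))]
    simp only [smul_add, smul_smul]
    module
  have hSy : ((S y : V) : g) = (c0 * A + c1 * C) • u0 + (c0 * B + c1 * D) • u1 := by
    have hyv : y = c0 • b 0 + c1 • b 1 := by
      apply Subtype.ext; rw [hrepr y]; push_cast; rfl
    rw [hyv]; rw [map_add, map_smul, map_smul]
    push_cast
    rw [hrepr (S (b 0)), hrepr (S (b 1))]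
    simp only [smul_add, smul_smul]
    module
  rw [hx, hy, hSx, hSy, key, key]
  have : A + D = 0 := htr
  linear_combination ((a0 * c1 - a1 * c0) * α ![u0, u1]) * this


open LieAlgebra in
/-- The projection of `ad z` to a complementary summand is nilpotent when `ad z` kills
the other summand. -/
lemma proj_ad_nilpotent (P Q : Submodule ℝ g) (h : IsCompl P Q) (z : g)
    (hz : ∀ w ∈ Q, ⁅z, w⁆ = 0) (hN : IsNilpotent (ad ℝ g z)) :
    IsNilpotent ((P.projectionOnto Q h) ∘ₗ (ad ℝ g z) ∘ₗ P.subtype :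
      Module.End ℝ P) := by
  set π := P.projectionOnto Q h
  set S : Module.End ℝ P := π ∘ₗ (ad ℝ g z) ∘ₗ P.subtype with hSdef
  have hlie : ∀ w : g, ⁅z, ((π w : P) : g)⁆ = ⁅z, w⁆ := by
    intro w
    have hw : ((π w : P) : g) + (Q.projectionOnto P h.symm w : g) = w :=
      Submodule.projection_add_projection_eq_self h w
    have h2 : ⁅z, (Q.projectionOnto P h.symm w : g)⁆ = 0 :=
      hz _ (Q.projectionOnto P h.symm w).2
    calc ⁅z, ((π w : P) : g)⁆
        = ⁅z, ((π w : P) : g)⁆ + ⁅z, (Q.projectionOnto P h.symm w : g)⁆ := by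
          rw [h2, add_zero]
      _ = ⁅z, ((π w : P) : g) + (Q.projectionOnto P h.symm w : g)⁆ := by
          rw [lie_add]
      _ = ⁅z, w⁆ := by rw [hw]
  have claim : ∀ n (v : P), (S ^ (n + 1)) v = π (((ad ℝ g z) ^ (n + 1)) (v : g)) := by
    intro n
    induction n with
    | zero => intro v; simp [hSdef, S]
    | succ n ih =>
      intro v
      have : (S ^ (n + 1 + 1)) v = S ((S ^ (n + 1)) v) := by
        rw [pow_succ', Module.End.mul_apply]
      rw [this, ih v, hSdef]
      simp only [LinearMap.comp_apply, Submodule.subtype_apply]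
      rw [ad_apply, hlie]
      have h2 : ((ad ℝ g z) ^ (n + 1 + 1)) (v : g) = ⁅z, ((ad ℝ g z) ^ (n + 1)) (v : g)⁆ := by
        rw [pow_succ']
        simp [Module.End.mul_apply, ad_apply]
      rw [h2]
  obtain ⟨N, hNz⟩ := hN
  exact ⟨N + 1, by
    ext v
    rw [claim N v]
    have : (ad ℝ g z) ^ (N + 1) = 0 := by rw [pow_succ, hNz]; simp
    simp [this]⟩


open LieAlgebra in
/-- A 2-dimensional subalgebra of a Lie algebra with all `ad` nilpotent is abelian. -/
lemma two_dim_abelian (p : LieSubalgebra ℝ g) [FiniteDimensional ℝ p.toSubmodule]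
    (hp : Module.finrank ℝ p.toSubmodule = 2)
    (had : ∀ x : g, IsNilpotent (ad ℝ g x)) :
    ∀ x ∈ p, ∀ y ∈ p, ⁅x, y⁆ = 0 := by
  classical
  let b : Module.Basis (Fin 2) ℝ p.toSubmodule := Module.finBasisOfFinrankEq ℝ _ hp
  set e1 : g := (b 0 : g) with he1
  set e2 : g := (b 1 : g) with he2
  have he1m : e1 ∈ p := (b 0).2
  have he2m : e2 ∈ p := (b 1).2
  have hwm : ⁅e1, e2⁆ ∈ p := p.lie_mem he1m he2m
  set wP : p.toSubmodule := ⟨⁅e1, e2⁆, hwm⟩ with hwP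
  set w : g := ⁅e1, e2⁆ with hwdef
  set a : ℝ := b.repr wP 0 with ha
  set c : ℝ := b.repr wP 1 with hc
  have hw : w = a • e1 + c • e2 := by
    have h := b.sum_repr wP
    rw [Fin.sum_univ_two] at h
    calc w = ((wP : p.toSubmodule) : g) := rfl
      _ = ((a • b 0 + c • b 1 : p.toSubmodule) : g) := by rw [h]
      _ = a • e1 + c • e2 := by push_cast; rfl
  have key1 : ⁅e1, w⁆ = c • w := by
    conv_lhs => rw [hw]
    rw [lie_add, lie_smul, lie_smul, lie_self, smul_zero, zero_add, ← hwdef]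
  have key2 : ⁅e2, w⁆ = (-a) • w := by
    conv_lhs => rw [hw]
    rw [lie_add, lie_smul, lie_smul, lie_self, smul_zero, add_zero]
    rw [show ⁅e2, e1⁆ = -w from by rw [hwdef, ← lie_skew]]
    module
  have h1 : ∀ n : ℕ, ((ad ℝ g e1) ^ (n + 1)) e2 = c ^ n • w := by
    intro n
    induction n with
    | zero => rw [zero_add, pow_one, ad_apply, pow_zero, one_smul, hwdef]
    | succ n ih =>
      have hstep : ((ad ℝ g e1) ^ (n + 1 + 1)) e2 = (ad ℝ g e1) (((ad ℝ g e1) ^ (n + 1)) e2) := by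
        rw [pow_succ', Module.End.mul_apply]
      rw [hstep, ih, map_smul, ad_apply, key1, smul_smul, pow_succ]
  have h2 : ∀ n : ℕ, ((ad ℝ g e2) ^ (n + 1)) e1 = (-a) ^ n • (-w) := by
    intro n
    induction n with
    | zero =>
      rw [zero_add, pow_one, ad_apply, pow_zero, one_smul]
      rw [show ⁅e2, e1⁆ = -w from by rw [hwdef, ← lie_skew]]
    | succ n ih =>
      have hstep : ((ad ℝ g e2) ^ (n + 1 + 1)) e1 = (ad ℝ g e2) (((ad ℝ g e2) ^ (n + 1)) e1) := by
        rw [pow_succ', Module.End.mul_apply]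
      rw [hstep, ih, map_smul, map_neg, ad_apply, key2, pow_succ]
      module
  obtain ⟨N, hN⟩ := had e1
  obtain ⟨M, hM⟩ := had e2
  have hc0 : c ^ (N + 1) • w = 0 := by
    rw [← h1 (N + 1)]
    have hz : (ad ℝ g e1) ^ (N + 1 + 1) = 0 := by rw [pow_succ, pow_succ, hN]; simp
    rw [hz]; simp
  have ha0 : (-a) ^ (M + 1) • (-w) = 0 := by
    rw [← h2 (M + 1)]
    have hz : (ad ℝ g e2) ^ (M + 1 + 1) = 0 := by rw [pow_succ, pow_succ, hM]; simp
    rw [hz]; simp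
  have hbr : w = 0 := by
    by_cases hw0 : w = 0
    · exact hw0
    · exfalso
      have hc' : c = 0 := by
        rcases smul_eq_zero.mp hc0 with h | h
        · exact pow_eq_zero_iff (Nat.succ_ne_zero N) |>.mp h
        · exact absurd h hw0
      have ha' : a = 0 := by
        rcases smul_eq_zero.mp ha0 with h | h
        · have h' := pow_eq_zero_iff (Nat.succ_ne_zero M) |>.mp h
          linarith [neg_eq_zero.mp h']
        · exact absurd (neg_eq_zero.mp h) hw0
      rw [hw, ha', hc', zero_smul, zero_smul, add_zero] at hw0
      exact hw0 rfl
  have hbr' : ⁅e1, e2⁆ = 0 := hbr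
  have hbr'' : ⁅e2, e1⁆ = 0 := by rw [← neg_eq_zero, lie_skew, hbr']
  intro x hx y hy
  set xP : p.toSubmodule := ⟨x, hx⟩ with hxP
  set yP : p.toSubmodule := ⟨y, hy⟩ with hyP
  have hxe : x = b.repr xP 0 • e1 + b.repr xP 1 • e2 := by
    have h := b.sum_repr xP
    rw [Fin.sum_univ_two] at h
    calc x = ((xP : p.toSubmodule) : g) := rfl
      _ = ((b.repr xP 0 • b 0 + b.repr xP 1 • b 1 : p.toSubmodule) : g) := by rw [h]
      _ = b.repr xP 0 • e1 + b.repr xP 1 • e2 := by push_cast; rfl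
  have hye : y = b.repr yP 0 • e1 + b.repr yP 1 • e2 := by
    have h := b.sum_repr yP
    rw [Fin.sum_univ_two] at h
    calc y = ((yP : p.toSubmodule) : g) := rfl
      _ = ((b.repr yP 0 • b 0 + b.repr yP 1 • b 1 : p.toSubmodule) : g) := by rw [h]
      _ = b.repr yP 0 • e1 + b.repr yP 1 • e2 := by push_cast; rfl
  rw [hxe, hye]
  simp [lie_add, add_lie, lie_smul, smul_lie, lie_self, hbr', hbr'']


/-- The (negated) Chevalley–Eilenberg differential of a 2-form, in cyclic form. -/
def Dform (α : AlternatingMap ℝ g ℝ (Fin 2)) (x y z : g) : ℝ :=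
  α ![⁅x, y⁆, z] - α ![⁅x, z⁆, y] + α ![⁅y, z⁆, x]

lemma amap_neg_right (α : AlternatingMap ℝ g ℝ (Fin 2)) (a c : g) :
    α ![a, -c] = -α ![a, c] := by
  have := amap_smul_right α (-1) a c; simpa using this

lemma Dform_swap12 (α : AlternatingMap ℝ g ℝ (Fin 2)) (x y z : g) :
    Dform α y x z = -Dform α x y z := by
  unfold Dform
  rw [← lie_skew y x, amap_neg_left α ⁅x, y⁆ z]
  ring

lemma Dform_swap23 (α : AlternatingMap ℝ g ℝ (Fin 2)) (x y z : g) :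
    Dform α x z y = -Dform α x y z := by
  unfold Dform
  rw [← lie_skew z y, amap_neg_left α ⁅y, z⁆ x]
  ring

lemma Dform_add1 (α : AlternatingMap ℝ g ℝ (Fin 2)) (x x' y z : g) :
    Dform α (x + x') y z = Dform α x y z + Dform α x' y z := by
  unfold Dform
  rw [add_lie, add_lie, amap_add_left, amap_add_left, amap_add_right]
  ring

lemma Dform_add2 (α : AlternatingMap ℝ g ℝ (Fin 2)) (x y y' z : g) :
    Dform α x (y + y') z = Dform α x y z + Dform α x y' z := by
  have h1 := Dform_swap12 α (y + y') x z
  have h2 := Dform_add1 α y y' x z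
  have h3 := Dform_swap12 α y x z
  have h4 := Dform_swap12 α y' x z
  linarith
lemma Dform_add3 (α : AlternatingMap ℝ g ℝ (Fin 2)) (x y z z' : g) :
    Dform α x y (z + z') = Dform α x y z + Dform α x y z' := by
  have h1 := Dform_swap23 α x (z + z') y
  have h2 := Dform_add2 α x z z' y
  have h3 := Dform_swap23 α x z y
  have h4 := Dform_swap23 α x z' y
  linarith


theorem ceD_two' (g : Type*) [LieRing g] [LieAlgebra ℝ g]
    (α : AlternatingMap ℝ g ℝ (Fin 2)) (x : Fin 3 → g) :
    ceD g α x = -α ![⁅x 0, x 1⁆, x 2] + α ![⁅x 0, x 2⁆, x 1] - α ![⁅x 1, x 2⁆, x 0] := by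
  show (∑ i : Fin 3, ∑ j : Fin 3,
        if hij : (i : ℕ) < (j : ℕ) then
          (-1 : ℝ) ^ ((i : ℕ) + (j : ℕ)) *
            α (fun m : Fin 2 =>
                if hm : (m : ℕ) = 0 then ⁅x i, x j⁆
                else
                  x (j.succAbove
                      ((⟨(i : ℕ), by omega⟩ : Fin 2).succAbove
                        (⟨(m : ℕ) - 1, by omega⟩ : Fin 1))))
        else 0) = _
  simp only [Fin.sum_univ_three]
  norm_num
  have h01 : (fun m : Fin 2 =>
      if m = 0 then ⁅x 0, x 1⁆
      else x (Fin.succAbove 1 (⟨(m : ℕ) - 1 + 1, by omega⟩ : Fin 2))) = ![⁅x 0, x 1⁆, x 2] := by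
    funext m; fin_cases m <;> rfl
  have h02 : (fun m : Fin 2 =>
      if m = 0 then ⁅x 0, x 2⁆
      else x (Fin.succAbove 2 (⟨(m : ℕ) - 1 + 1, by omega⟩ : Fin 2))) = ![⁅x 0, x 2⁆, x 1] := by
    funext m; fin_cases m <;> rfl
  have h12 : (fun m : Fin 2 =>
      if m = 0 then ⁅x 1, x 2⁆
      else x (Fin.succAbove 2 (Fin.succAbove 1 (⟨(m : ℕ) - 1, by omega⟩ : Fin 1)))) = ![⁅x 1, x 2⁆, x 0] := by
    funext m; fin_cases m <;> rfl
  rw [h01, h02, h12]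
  ring

end

noncomputable section

/-- On a `4`-dimensional nilpotent real Lie algebra with a linear
D-complex structure `K`, every `K`-invariant `2`-form is closed; consequently the
`K`-invariant and `K`-anti-invariant components of any closed `2`-form are closed. -/
theorem four_dim_nilpotent_invariant_two_forms_closed
    (g : Type*) [LieRing g] [LieAlgebra ℝ g] [FiniteDimensional ℝ g]
    [LieRing.IsNilpotent g]
    (hg : Module.finrank ℝ g = 4)
    (p q : LieSubalgebra ℝ g)
    (hcompl : IsCompl p.toSubmodule q.toSubmodule)
    (hp : Module.finrank ℝ p.toSubmodule = 2)
    (hq : Module.finrank ℝ q.toSubmodule = 2)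
    (K : g →ₗ[ℝ] g)
    (hKp : ∀ x ∈ p, K x = x) (hKq : ∀ x ∈ q, K x = -x) :
    (∀ α : AlternatingMap ℝ g ℝ (Fin 2),
        α.compLinearMap K = α → ceD g α = 0) ∧
    (∀ α : AlternatingMap ℝ g ℝ (Fin 2), ceD g α = 0 →
        ceD g ((2⁻¹ : ℝ) • (α + α.compLinearMap K)) = 0 ∧
        ceD g ((2⁻¹ : ℝ) • (α - α.compLinearMap K)) = 0) := by
  classical
  have had : ∀ x : g, IsNilpotent (LieAlgebra.ad ℝ g x) := by
    obtain ⟨k, hk⟩ := LieAlgebra.nilpotent_ad_of_nilpotent_algebra ℝ g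
    exact fun x => ⟨k, hk x⟩
  have habp := two_dim_abelian p hp had
  have habq := two_dim_abelian q hq had
  set πp := p.toSubmodule.projectionOnto q.toSubmodule hcompl with hπpdef
  set πq := q.toSubmodule.projectionOnto p.toSubmodule hcompl.symm with hπqdef
  have hsplit : ∀ v : g, ((πp v : p.toSubmodule) : g) + ((πq v : q.toSubmodule) : g) = v :=
    fun v => Submodule.projection_add_projection_eq_self hcompl v
  have part1 : ∀ α : AlternatingMap ℝ g ℝ (Fin 2),
      α.compLinearMap K = α → ceD g α = 0 := by
    intro α hα
    have hmix : ∀ x ∈ p, ∀ y ∈ q, α ![x, y] = 0 := by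
      intro x hx y hy
      have h1 : α.compLinearMap K ![x, y] = α ![x, y] := by rw [hα]
      rw [AlternatingMap.compLinearMap_apply] at h1
      have h2 : (fun i => K (![x, y] i)) = ![x, -y] := by
        funext i; fin_cases i
        · simp [hKp x hx]
        · simp [hKq y hy]
      rw [h2, amap_neg_right] at h1
      linarith
    have hmix' : ∀ y ∈ q, ∀ x ∈ p, α ![y, x] = 0 := by
      intro y hy x hx; rw [amap_swap, hmix x hx y hy, neg_zero]
    have hppp : ∀ x ∈ p, ∀ y ∈ p, ∀ z ∈ p, Dform α x y z = 0 := by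
      intro x hx y hy z hz
      unfold Dform
      rw [habp x hx y hy, habp x hx z hz, habp y hy z hz,
        amap_zero_left, amap_zero_left, amap_zero_left]
      ring
    have hqqq : ∀ x ∈ q, ∀ y ∈ q, ∀ z ∈ q, Dform α x y z = 0 := by
      intro x hx y hy z hz
      unfold Dform
      rw [habq x hx y hy, habq x hx z hz, habq y hy z hz,
        amap_zero_left, amap_zero_left, amap_zero_left]
      ring
    have hppq : ∀ x ∈ p, ∀ y ∈ p, ∀ z ∈ q, Dform α x y z = 0 := by
      intro x hx y hy z hz
      have hSnil := proj_ad_nilpotent p.toSubmodule q.toSubmodule hcompl z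
        (fun w hw => habq z hz w hw) (had z)
      have pair : α ![((πp ⁅z, x⁆ : p.toSubmodule) : g), y]
          + α ![x, ((πp ⁅z, y⁆ : p.toSubmodule) : g)] = 0 :=
        pair_lemma p.toSubmodule hp α _ hSnil ⟨x, hx⟩ ⟨y, hy⟩
      unfold Dform
      rw [habp x hx y hy, amap_zero_left]
      have hd1 : ⁅x, z⁆ = -⁅z, x⁆ := by rw [← lie_skew z x, neg_neg]
      have hd2 : ⁅y, z⁆ = -⁅z, y⁆ := by rw [← lie_skew z y, neg_neg]
      have e1 : α ![⁅x, z⁆, y] = -α ![((πp ⁅z, x⁆ : p.toSubmodule) : g), y] := by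
        conv_lhs => rw [hd1, ← hsplit ⁅z, x⁆]
        rw [neg_add, amap_add_left, amap_neg_left, amap_neg_left,
          hmix' _ (πq ⁅z, x⁆).2 y hy, neg_zero, add_zero]
      have e2 : α ![⁅y, z⁆, x] = -α ![((πp ⁅z, y⁆ : p.toSubmodule) : g), x] := by
        conv_lhs => rw [hd2, ← hsplit ⁅z, y⁆]
        rw [neg_add, amap_add_left, amap_neg_left, amap_neg_left,
          hmix' _ (πq ⁅z, y⁆).2 x hx, neg_zero, add_zero]
      have hsw := amap_swap α x ((πp ⁅z, y⁆ : p.toSubmodule) : g)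
      rw [e1, e2]
      linarith
    have hpqq : ∀ x ∈ p, ∀ y ∈ q, ∀ z ∈ q, Dform α x y z = 0 := by
      intro x hx y hy z hz
      have hSnil := proj_ad_nilpotent q.toSubmodule p.toSubmodule hcompl.symm x
        (fun w hw => habp x hx w hw) (had x)
      have pair : α ![((πq ⁅x, y⁆ : q.toSubmodule) : g), z]
          + α ![y, ((πq ⁅x, z⁆ : q.toSubmodule) : g)] = 0 :=
        pair_lemma q.toSubmodule hq α _ hSnil ⟨y, hy⟩ ⟨z, hz⟩
      unfold Dform
      rw [habq y hy z hz, amap_zero_left]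
      have e1 : α ![⁅x, y⁆, z] = α ![((πq ⁅x, y⁆ : q.toSubmodule) : g), z] := by
        conv_lhs => rw [← hsplit ⁅x, y⁆]
        rw [amap_add_left, hmix _ (πp ⁅x, y⁆).2 z hz, zero_add]
      have e2 : α ![⁅x, z⁆, y] = α ![((πq ⁅x, z⁆ : q.toSubmodule) : g), y] := by
        conv_lhs => rw [← hsplit ⁅x, z⁆]
        rw [amap_add_left, hmix _ (πp ⁅x, z⁆).2 y hy, zero_add]
      have hsw := amap_swap α y ((πq ⁅x, z⁆ : q.toSubmodule) : g)
      rw [e1, e2]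
      linarith
    have hDzero : ∀ x y z : g, Dform α x y z = 0 := by
      intro x y z
      have hmxp : ((πp x : p.toSubmodule) : g) ∈ p := (πp x).2
      have hmyp : ((πp y : p.toSubmodule) : g) ∈ p := (πp y).2
      have hmzp : ((πp z : p.toSubmodule) : g) ∈ p := (πp z).2
      have hmxq : ((πq x : q.toSubmodule) : g) ∈ q := (πq x).2
      have hmyq : ((πq y : q.toSubmodule) : g) ∈ q := (πq y).2
      have hmzq : ((πq z : q.toSubmodule) : g) ∈ q := (πq z).2
      have t1 := hppp _ hmxp _ hmyp _ hmzp
      have t2 := hppq _ hmxp _ hmyp _ hmzq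
      have t3 : Dform α ((πp x : p.toSubmodule) : g) ((πq y : q.toSubmodule) : g)
          ((πp z : p.toSubmodule) : g) = 0 := by
        rw [Dform_swap23 α _ ((πp z : p.toSubmodule) : g) ((πq y : q.toSubmodule) : g),
          hppq _ hmxp _ hmzp _ hmyq, neg_zero]
      have t4 : Dform α ((πq x : q.toSubmodule) : g) ((πp y : p.toSubmodule) : g)
          ((πp z : p.toSubmodule) : g) = 0 := by
        rw [Dform_swap12 α ((πp y : p.toSubmodule) : g) _ _,
          Dform_swap23 α _ ((πp z : p.toSubmodule) : g) ((πq x : q.toSubmodule) : g),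
          hppq _ hmyp _ hmzp _ hmxq]
        ring
      have t5 := hpqq _ hmxp _ hmyq _ hmzq
      have t6 : Dform α ((πq x : q.toSubmodule) : g) ((πp y : p.toSubmodule) : g)
          ((πq z : q.toSubmodule) : g) = 0 := by
        rw [Dform_swap12 α ((πp y : p.toSubmodule) : g) _ _,
          hpqq _ hmyp _ hmxq _ hmzq, neg_zero]
      have t7 : Dform α ((πq x : q.toSubmodule) : g) ((πq y : q.toSubmodule) : g)
          ((πp z : p.toSubmodule) : g) = 0 := by
        rw [Dform_swap23 α _ ((πp z : p.toSubmodule) : g) ((πq y : q.toSubmodule) : g)]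
        rw [Dform_swap12 α ((πp z : p.toSubmodule) : g) _ _,
          hpqq _ hmzp _ hmxq _ hmyq]
        ring
      have t8 := hqqq _ hmxq _ hmyq _ hmzq
      calc Dform α x y z
          = Dform α (((πp x : p.toSubmodule) : g) + ((πq x : q.toSubmodule) : g))
              (((πp y : p.toSubmodule) : g) + ((πq y : q.toSubmodule) : g))
              (((πp z : p.toSubmodule) : g) + ((πq z : q.toSubmodule) : g)) := by
            rw [hsplit x, hsplit y, hsplit z]
        _ = 0 := by
            simp only [Dform_add1, Dform_add2, Dform_add3]
            rw [t1, t2, t3, t4, t5, t6, t7, t8]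
            ring
    funext v
    rw [ceD_two' g α v]
    have h := hDzero (v 0) (v 1) (v 2)
    unfold Dform at h
    simp only [Pi.zero_apply]
    linarith
  refine ⟨part1, fun α hα => ?_⟩
  have hKv : ∀ v : g, K v = ((πp v : p.toSubmodule) : g) - ((πq v : q.toSubmodule) : g) := by
    intro v
    conv_lhs => rw [← hsplit v]
    rw [map_add, hKp _ (πp v).2, hKq _ (πq v).2, ← sub_eq_add_neg]
  have hK2 : K ∘ₗ K = LinearMap.id := by
    ext v
    simp only [LinearMap.comp_apply, LinearMap.id_coe, id_eq]
    rw [hKv v, map_sub, hKp _ (πp v).2, hKq _ (πq v).2, sub_neg_eq_add, hsplit v]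
  set β := (2⁻¹ : ℝ) • (α + α.compLinearMap K) with hβdef
  have hsm : ∀ (c : ℝ) (γ : AlternatingMap ℝ g ℝ (Fin 2)),
      (c • γ).compLinearMap K = c • γ.compLinearMap K := by
    intro c γ; ext v
    simp [AlternatingMap.compLinearMap_apply]
  have hβinv : β.compLinearMap K = β := by
    rw [hβdef, hsm, AlternatingMap.add_compLinearMap, AlternatingMap.compLinearMap_assoc,
      hK2, AlternatingMap.compLinearMap_id, add_comm]
  have h1 : ceD g β = 0 := part1 β hβinv
  constructor
  · exact h1
  · have hdiff : (2⁻¹ : ℝ) • (α - α.compLinearMap K) = α + (-1 : ℝ) • β := by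
      rw [hβdef]; module
    rw [hdiff, ceD_add, ceD_smul, hα, h1]
    simp

end
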